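/- Let T be a consistent extension of Robinson arithmetic Q such that the set Pr_T of Gödel numbers of sentences provable in T is definable in the standard model ω. Then the sentence ψ(n,t) is true in ω, but T does not prove ψ(n,t). -/

import Mathlib

namespace Boolos

/-- Terms of the first-order language of arithmetic: variables v₀,v₁,…, 0, successor s, +, ·. -/
inductive Term : Type
  | var : ℕ → Term
  | zero : Term
  | succ : Term → Term
  | add : Term → Term → Term
  | mul : Term → Term → Term
  deriving DecidableEq

/-- Formulas of the first-order language of arithmetic. -/
inductive Formula : Type
  | eq : Term → Term → Formula
  | lt : Term → Term → Formula
  | not : Formula → Formula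
  | and : Formula → Formula → Formula
  | or : Formula → Formula → Formula
  | imp : Formula → Formula → Formula
  | all : ℕ → Formula → Formula
  | ex : ℕ → Formula → Formula
  deriving DecidableEq

/-- The primitive symbols of the language (finitely many apart from the variables). -/
inductive Symbol : Type
  | zero : Symbol
  | succ : Symbol
  | plus : Symbol
  | times : Symbol
  | eqs : Symbol
  | lts : Symbol
  | nots : Symbol
  | ands : Symbol
  | ors : Symbol
  | imps : Symbol
  | alls : Symbol
  | exs : Symbol
  | var : ℕ → Symbol
  deriving DecidableEq

/-- Gödel numbers of the primitive symbols. -/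
def Symbol.code : Symbol → ℕ
  | .zero => 1
  | .succ => 2
  | .plus => 3
  | .times => 4
  | .eqs => 5
  | .lts => 6
  | .nots => 7
  | .ands => 8
  | .ors => 9
  | .imps => 10
  | .alls => 11
  | .exs => 12
  | .var n => 13 + n

/-- The sequence of symbols occurring in a term. -/
def Term.symbols : Term → List Symbol
  | .var i => [.var i]
  | .zero => [.zero]
  | .succ t => .succ :: t.symbols
  | .add t u => t.symbols ++ .plus :: u.symbols
  | .mul t u => t.symbols ++ .times :: u.symbols

/-- The sequence of symbols occurring in a formula. -/
def Formula.symbols : Formula → List Symbol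
  | .eq t u => t.symbols ++ .eqs :: u.symbols
  | .lt t u => t.symbols ++ .lts :: u.symbols
  | .not φ => .nots :: φ.symbols
  | .and φ ψ => φ.symbols ++ .ands :: ψ.symbols
  | .or φ ψ => φ.symbols ++ .ors :: ψ.symbols
  | .imp φ ψ => φ.symbols ++ .imps :: ψ.symbols
  | .all i φ => .alls :: .var i :: φ.symbols
  | .ex i φ => .exs :: .var i :: φ.symbols

/-- |e| : the length (number of symbols) of a term. -/
def Term.length (t : Term) : ℕ := t.symbols.length

/-- |μ| : the length (number of symbols) of a formula. -/
def Formula.length (φ : Formula) : ℕ := φ.symbols.length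

/-- A fixed standard (pairing-based, injective) Gödel numbering of terms. -/
def Term.code : Term → ℕ
  | .var i => Nat.pair 0 i
  | .zero => Nat.pair 1 0
  | .succ t => Nat.pair 2 t.code
  | .add t u => Nat.pair 3 (Nat.pair t.code u.code)
  | .mul t u => Nat.pair 4 (Nat.pair t.code u.code)

/-- ⌜μ⌝ : the Gödel number of a formula. -/
def Formula.gnum : Formula → ℕ
  | .eq t u => Nat.pair 0 (Nat.pair t.code u.code)
  | .lt t u => Nat.pair 1 (Nat.pair t.code u.code)
  | .not φ => Nat.pair 2 φ.gnum
  | .and φ ψ => Nat.pair 3 (Nat.pair φ.gnum ψ.gnum)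
  | .or φ ψ => Nat.pair 4 (Nat.pair φ.gnum ψ.gnum)
  | .imp φ ψ => Nat.pair 5 (Nat.pair φ.gnum ψ.gnum)
  | .all i φ => Nat.pair 6 (Nat.pair i φ.gnum)
  | .ex i φ => Nat.pair 7 (Nat.pair i φ.gnum)

/-- The variables occurring in a term. -/
def Term.varsOf : Term → Finset ℕ
  | .var i => {i}
  | .zero => ∅
  | .succ t => t.varsOf
  | .add t u => t.varsOf ∪ u.varsOf
  | .mul t u => t.varsOf ∪ u.varsOf

/-- All variables (free or bound) occurring in a formula. -/
def Formula.allVars : Formula → Finset ℕ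
  | .eq t u => t.varsOf ∪ u.varsOf
  | .lt t u => t.varsOf ∪ u.varsOf
  | .not φ => φ.allVars
  | .and φ ψ => φ.allVars ∪ ψ.allVars
  | .or φ ψ => φ.allVars ∪ ψ.allVars
  | .imp φ ψ => φ.allVars ∪ ψ.allVars
  | .all i φ => insert i φ.allVars
  | .ex i φ => insert i φ.allVars

/-- The free variables of a formula. -/
def Formula.freeVars : Formula → Finset ℕ
  | .eq t u => t.varsOf ∪ u.varsOf
  | .lt t u => t.varsOf ∪ u.varsOf
  | .not φ => φ.freeVars
  | .and φ ψ => φ.freeVars ∪ ψ.freeVars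
  | .or φ ψ => φ.freeVars ∪ ψ.freeVars
  | .imp φ ψ => φ.freeVars ∪ ψ.freeVars
  | .all i φ => φ.freeVars.erase i
  | .ex i φ => φ.freeVars.erase i

/-- Substitution of a term for a variable in a term. -/
def Term.subst : Term → ℕ → Term → Term
  | .var i, x, s => if i = x then s else .var i
  | .zero, _, _ => .zero
  | .succ t, x, s => .succ (t.subst x s)
  | .add t u, x, s => .add (t.subst x s) (u.subst x s)
  | .mul t u, x, s => .mul (t.subst x s) (u.subst x s)

/-- Substitution of a term for the free occurrences of a variable in a formula. -/
def Formula.subst : Formula → ℕ → Term → Formula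
  | .eq t u, x, s => .eq (t.subst x s) (u.subst x s)
  | .lt t u, x, s => .lt (t.subst x s) (u.subst x s)
  | .not φ, x, s => .not (φ.subst x s)
  | .and φ ψ, x, s => .and (φ.subst x s) (ψ.subst x s)
  | .or φ ψ, x, s => .or (φ.subst x s) (ψ.subst x s)
  | .imp φ ψ, x, s => .imp (φ.subst x s) (ψ.subst x s)
  | .all i φ, x, s => if i = x then .all i φ else .all i (φ.subst x s)
  | .ex i φ, x, s => if i = x then .ex i φ else .ex i (φ.subst x s)

/-- The number of occurrences of a variable in a term. -/
def Term.countOcc : Term → ℕ → ℕ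
  | .var i, x => if i = x then 1 else 0
  | .zero, _ => 0
  | .succ t, x => t.countOcc x
  | .add t u, x => t.countOcc x + u.countOcc x
  | .mul t u, x => t.countOcc x + u.countOcc x

/-- The number of free occurrences of a variable in a formula. -/
def Formula.countFreeOcc : Formula → ℕ → ℕ
  | .eq t u, x => t.countOcc x + u.countOcc x
  | .lt t u, x => t.countOcc x + u.countOcc x
  | .not φ, x => φ.countFreeOcc x
  | .and φ ψ, x => φ.countFreeOcc x + ψ.countFreeOcc x
  | .or φ ψ, x => φ.countFreeOcc x + ψ.countFreeOcc x
  | .imp φ ψ, x => φ.countFreeOcc x + ψ.countFreeOcc x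
  | .all i φ, x => if i = x then 0 else φ.countFreeOcc x
  | .ex i φ, x => if i = x then 0 else φ.countFreeOcc x

/-- The numeral s s … s 0 for a natural number. -/
def numeral : ℕ → Term
  | 0 => .zero
  | n + 1 => .succ (numeral n)

/-- Structures for the language of arithmetic. -/
structure Struct where
  carrier : Type
  zero : carrier
  succ : carrier → carrier
  add : carrier → carrier → carrier
  mul : carrier → carrier → carrier
  lt : carrier → carrier → Prop

/-- The value of a term in a structure under an assignment. -/
def Term.val (M : Struct) (v : ℕ → M.carrier) : Term → M.carrier
  | .var i => v i
  | .zero => M.zero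
  | .succ t => M.succ (Term.val M v t)
  | .add t u => M.add (Term.val M v t) (Term.val M v u)
  | .mul t u => M.mul (Term.val M v t) (Term.val M v u)

/-- Satisfaction of a formula in a structure under an assignment. -/
def Formula.Realize (M : Struct) : (ℕ → M.carrier) → Formula → Prop
  | v, .eq t u => Term.val M v t = Term.val M v u
  | v, .lt t u => M.lt (Term.val M v t) (Term.val M v u)
  | v, .not φ => ¬ Formula.Realize M v φ
  | v, .and φ ψ => Formula.Realize M v φ ∧ Formula.Realize M v ψ
  | v, .or φ ψ => Formula.Realize M v φ ∨ Formula.Realize M v ψ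
  | v, .imp φ ψ => Formula.Realize M v φ → Formula.Realize M v ψ
  | v, .all i φ => ∀ a : M.carrier, Formula.Realize M (Function.update v i a) φ
  | v, .ex i φ => ∃ a : M.carrier, Formula.Realize M (Function.update v i a) φ

/-- ω : the standard model of arithmetic. -/
@[reducible] def stdModel : Struct :=
  { carrier := ℕ, zero := 0, succ := Nat.succ, add := (· + ·), mul := (· * ·),
    lt := (· < ·) }

/-- A formula is true if it holds in the standard model ω (under every assignment). -/
def IsTrue (φ : Formula) : Prop := ∀ v : ℕ → ℕ, Formula.Realize stdModel v φ

/-- The value of a (closed) term in the standard model ω. -/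
def Term.valNat (t : Term) : ℕ := Term.val stdModel (fun _ => 0) t

/-- A sentence is a formula with no free variables. -/
def Formula.IsSentence (φ : Formula) : Prop := φ.freeVars = ∅

/-- Provability from a theory; by the Gödel completeness theorem, identified with
semantic consequence. -/
def Proves (T : Set Formula) (φ : Formula) : Prop :=
  ∀ (M : Struct) (v : ℕ → M.carrier),
    (∀ ψ ∈ T, Formula.Realize M v ψ) → Formula.Realize M v φ

/-- Consistency: no formula is both provable and refutable. -/
def Consistent (T : Set Formula) : Prop :=
  ¬ ∃ φ : Formula, Proves T φ ∧ Proves T (.not φ)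

/-- The biconditional, as an abbreviation. -/
def Formula.iffF (φ ψ : Formula) : Formula := .and (.imp φ ψ) (.imp ψ φ)

def v0 : Term := .var 0
def v1 : Term := .var 1
def v2 : Term := .var 2

/-- The axioms of Robinson arithmetic Q (with < defined as usual). -/
def QAxioms : Set Formula :=
  { .all 0 (.all 1 (.imp (.eq (.succ v0) (.succ v1)) (.eq v0 v1))),
    .all 0 (.not (.eq (.succ v0) .zero)),
    .all 0 (.imp (.not (.eq v0 .zero)) (.ex 1 (.eq v0 (.succ v1)))),
    .all 0 (.eq (.add v0 .zero) v0),
    .all 0 (.all 1 (.eq (.add v0 (.succ v1)) (.succ (.add v0 v1)))),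
    .all 0 (.eq (.mul v0 .zero) .zero),
    .all 0 (.all 1 (.eq (.mul v0 (.succ v1)) (.add (.mul v0 v1) v0))),
    .all 0 (.all 1 (Formula.iffF (.lt v0 v1) (.ex 2 (.eq (.add v2 (.succ v0)) v1)))) }

/-- Pr_S : the set of Gödel numbers of sentences provable in S. -/
def PrSet (T : Set Formula) : Set ℕ :=
  {m | ∃ σ : Formula, σ.IsSentence ∧ Proves T σ ∧ m = σ.gnum}

/-- A formula μ with at most the free variable v₀ names the number i in T
if T ⊢ (∀v₀)(μ(v₀) ↔ v₀ = i). -/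
def Names (T : Set Formula) (μ : Formula) (i : ℕ) : Prop :=
  μ.freeVars ⊆ {0} ∧ Proves T (.all 0 (Formula.iffF μ (.eq v0 (numeral i))))

/-- i is named in T by some formula of length < m. -/
def Nameable (T : Set Formula) (m i : ℕ) : Prop :=
  ∃ μ : Formula, μ.length < m ∧ Names T μ i

/-- φ(v₀) defines the set A in the standard model ω. -/
def DefinesSet (φ : Formula) (A : Set ℕ) : Prop :=
  φ.freeVars ⊆ {0} ∧ ∀ i : ℕ, i ∈ A ↔ IsTrue (φ.subst 0 (numeral i))

/-- A set of natural numbers is definable (in ω). -/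
def Definable (A : Set ℕ) : Prop := ∃ φ : Formula, DefinesSet φ A

/-- φ(v₀,v₁) defines the binary relation R in the standard model ω. -/
def DefinesRel (φ : Formula) (R : ℕ → ℕ → Prop) : Prop :=
  φ.freeVars ⊆ {0, 1} ∧
    ∀ i j : ℕ, R i j ↔ IsTrue ((φ.subst 0 (numeral i)).subst 1 (numeral j))

/-- The relation B of Boolos's construction: (i,j) ∈ B iff some formula μ with at most
the free variable v₀, with ⌜μ⌝ < g(j) and |μ| < j, names i. -/
def BRel (T : Set Formula) (g : ℕ → ℕ) (i j : ℕ) : Prop :=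
  ∃ μ : Formula, μ.gnum < g j ∧ μ.length < j ∧ Names T μ i

/-- g is a recursive function bounding Gödel numbers in terms of length, as in the
construction: whenever all variables of μ are among the first j ones and |μ| < j,
we have ⌜μ⌝ < g(j). -/
def GoodBound (g : ℕ → ℕ) : Prop :=
  Computable g ∧
    ∀ (μ : Formula) (j : ℕ), μ.allVars ⊆ Finset.range j → μ.length < j → μ.gnum < g j

/-- ψ(v₀,v₁) ≔ ¬φ(v₀,v₁) ∧ (∀v₂ < v₀) φ(v₂,v₁). -/
def psiOf (φ : Formula) : Formula :=
  .and (.not φ) (.all 2 (.imp (.lt v2 v0) (φ.subst 0 v2)))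

/-- The closed term t ≔ 10·(k·k). -/
def tTerm (k : ℕ) : Term := .mul (numeral 10) (.mul (numeral k) (numeral k))

lemma Term.val_congr {M : Struct} {v w : ℕ → M.carrier} :
    ∀ t : Term, (∀ i ∈ t.varsOf, v i = w i) → Term.val M v t = Term.val M w t
  | .var i, h => h i (by simp [Term.varsOf])
  | .zero, _ => rfl
  | .succ t, h => by simp [Term.val, Term.val_congr t (fun i hi => h i (by simpa [Term.varsOf] using hi))]
  | .add t u, h => by
      simp only [Term.val]
      rw [Term.val_congr t (fun i hi => h i (by simp [Term.varsOf, hi])),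
        Term.val_congr u (fun i hi => h i (by simp [Term.varsOf, hi]))]
  | .mul t u, h => by
      simp only [Term.val]
      rw [Term.val_congr t (fun i hi => h i (by simp [Term.varsOf, hi])),
        Term.val_congr u (fun i hi => h i (by simp [Term.varsOf, hi]))]

lemma Formula.realize_congr {M : Struct} :
    ∀ (φ : Formula) {v w : ℕ → M.carrier}, (∀ i ∈ φ.freeVars, v i = w i) →
      (Formula.Realize M v φ ↔ Formula.Realize M w φ)
  | .eq t u, v, w, h => by
      simp only [Formula.Realize]
      rw [Term.val_congr t (fun i hi => h i (by simp [Formula.freeVars, hi])),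
        Term.val_congr u (fun i hi => h i (by simp [Formula.freeVars, hi]))]
  | .lt t u, v, w, h => by
      simp only [Formula.Realize]
      rw [Term.val_congr t (fun i hi => h i (by simp [Formula.freeVars, hi])),
        Term.val_congr u (fun i hi => h i (by simp [Formula.freeVars, hi]))]
  | .not φ, v, w, h => by
      simp only [Formula.Realize]
      rw [Formula.realize_congr φ (fun i hi => h i (by simpa [Formula.freeVars] using hi))]
  | .and φ ψ, v, w, h => by
      simp only [Formula.Realize]
      rw [Formula.realize_congr φ (fun i hi => h i (by simp [Formula.freeVars, hi])),
        Formula.realize_congr ψ (fun i hi => h i (by simp [Formula.freeVars, hi]))]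
  | .or φ ψ, v, w, h => by
      simp only [Formula.Realize]
      rw [Formula.realize_congr φ (fun i hi => h i (by simp [Formula.freeVars, hi])),
        Formula.realize_congr ψ (fun i hi => h i (by simp [Formula.freeVars, hi]))]
  | .imp φ ψ, v, w, h => by
      simp only [Formula.Realize]
      rw [Formula.realize_congr φ (fun i hi => h i (by simp [Formula.freeVars, hi])),
        Formula.realize_congr ψ (fun i hi => h i (by simp [Formula.freeVars, hi]))]
  | .all j φ, v, w, h => by
      simp only [Formula.Realize]
      refine forall_congr' fun a => Formula.realize_congr φ fun i hi => ?_
      by_cases hij : i = j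
      · subst hij; simp
      · simp only [Function.update_of_ne hij]
        exact h i (by simp [Formula.freeVars, Finset.mem_erase, hij, hi])
  | .ex j φ, v, w, h => by
      simp only [Formula.Realize]
      refine exists_congr fun a => Formula.realize_congr φ fun i hi => ?_
      by_cases hij : i = j
      · subst hij; simp
      · simp only [Function.update_of_ne hij]
        exact h i (by simp [Formula.freeVars, Finset.mem_erase, hij, hi])
lemma Term.val_subst {M : Struct} {v : ℕ → M.carrier} {x : ℕ} {s : Term} :
    ∀ t : Term, Term.val M v (t.subst x s) =
      Term.val M (Function.update v x (Term.val M v s)) t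
  | .var i => by
      by_cases h : i = x
      · subst h; simp [Term.subst, Term.val]
      · simp [Term.subst, h, Term.val, Function.update_of_ne h]
  | .zero => rfl
  | .succ t => by simp [Term.subst, Term.val, Term.val_subst t]
  | .add t u => by simp [Term.subst, Term.val, Term.val_subst t, Term.val_subst u]
  | .mul t u => by simp [Term.subst, Term.val, Term.val_subst t, Term.val_subst u]

lemma Formula.realize_subst {M : Struct} {x : ℕ} {s : Term} :
    ∀ (φ : Formula) (v : ℕ → M.carrier), (∀ i ∈ φ.allVars, i ∉ s.varsOf) →
      (Formula.Realize M v (φ.subst x s) ↔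
        Formula.Realize M (Function.update v x (Term.val M v s)) φ)
  | .eq t u, v, _ => by simp [Formula.subst, Formula.Realize, Term.val_subst]
  | .lt t u, v, _ => by simp [Formula.subst, Formula.Realize, Term.val_subst]
  | .not φ, v, h => by
      simp only [Formula.subst, Formula.Realize]
      rw [Formula.realize_subst φ v (fun i hi => h i (by simpa [Formula.allVars] using hi))]
  | .and φ ψ, v, h => by
      simp only [Formula.subst, Formula.Realize]
      rw [Formula.realize_subst φ v (fun i hi => h i (by simp [Formula.allVars, hi])),
        Formula.realize_subst ψ v (fun i hi => h i (by simp [Formula.allVars, hi]))]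
  | .or φ ψ, v, h => by
      simp only [Formula.subst, Formula.Realize]
      rw [Formula.realize_subst φ v (fun i hi => h i (by simp [Formula.allVars, hi])),
        Formula.realize_subst ψ v (fun i hi => h i (by simp [Formula.allVars, hi]))]
  | .imp φ ψ, v, h => by
      simp only [Formula.subst, Formula.Realize]
      rw [Formula.realize_subst φ v (fun i hi => h i (by simp [Formula.allVars, hi])),
        Formula.realize_subst ψ v (fun i hi => h i (by simp [Formula.allVars, hi]))]
  | .all j φ, v, h => by
      by_cases hj : j = x
      · subst hj
        simp only [Formula.subst, if_pos rfl, Formula.Realize]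
        refine forall_congr' fun a => Formula.realize_congr φ fun i hi => ?_
        by_cases hij : i = j
        · subst hij; simp
        · simp [Function.update_of_ne hij]
      · simp only [Formula.subst, if_neg hj, Formula.Realize]
        refine forall_congr' fun a => ?_
        rw [Formula.realize_subst φ (Function.update v j a)
          (fun i hi => h i (by simp [Formula.allVars, hi]))]
        have hs : Term.val M (Function.update v j a) s = Term.val M v s :=
          Term.val_congr s fun i hi => by
            have : i ≠ j := fun e => h j (by simp [Formula.allVars]) (e ▸ hi)
            simp [Function.update_of_ne this]
        rw [hs]
        refine Formula.realize_congr φ fun i hi => ?_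
        rcases eq_or_ne i x with rfl | hix
        · simp [Function.update_self, Function.update_of_ne (Ne.symm hj)]
        · rw [Function.update_of_ne hix]
          rcases eq_or_ne i j with rfl | hij
          · simp
          · rw [Function.update_of_ne hij, Function.update_of_ne hij,
              Function.update_of_ne hix]
  | .ex j φ, v, h => by
      by_cases hj : j = x
      · subst hj
        simp only [Formula.subst, if_pos rfl, Formula.Realize]
        refine exists_congr fun a => Formula.realize_congr φ fun i hi => ?_
        by_cases hij : i = j
        · subst hij; simp
        · simp [Function.update_of_ne hij]
      · simp only [Formula.subst, if_neg hj, Formula.Realize]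
        refine exists_congr fun a => ?_
        rw [Formula.realize_subst φ (Function.update v j a)
          (fun i hi => h i (by simp [Formula.allVars, hi]))]
        have hs : Term.val M (Function.update v j a) s = Term.val M v s :=
          Term.val_congr s fun i hi => by
            have : i ≠ j := fun e => h j (by simp [Formula.allVars]) (e ▸ hi)
            simp [Function.update_of_ne this]
        rw [hs]
        refine Formula.realize_congr φ fun i hi => ?_
        rcases eq_or_ne i x with rfl | hix
        · simp [Function.update_self, Function.update_of_ne (Ne.symm hj)]
        · rw [Function.update_of_ne hix]
          rcases eq_or_ne i j with rfl | hij
          · simp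
          · rw [Function.update_of_ne hij, Function.update_of_ne hij,
              Function.update_of_ne hix]
@[simp] lemma numeral_varsOf : ∀ m : ℕ, (numeral m).varsOf = ∅
  | 0 => rfl
  | m + 1 => by simp [numeral, Term.varsOf, numeral_varsOf m]

lemma numeral_val_std (v : ℕ → ℕ) : ∀ m : ℕ, Term.val stdModel v (numeral m) = m
  | 0 => rfl
  | m + 1 => by simp [numeral, Term.val, numeral_val_std v m]

@[simp] lemma numeral_length : ∀ m : ℕ, (numeral m).length = m + 1
  | 0 => rfl
  | m + 1 => by
      simp [numeral, Term.length, Term.symbols] at *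
      simpa [Term.length] using numeral_length m

lemma term_length_pos : ∀ t : Term, 0 < t.length
  | .var i => by simp [Term.length, Term.symbols]
  | .zero => by simp [Term.length, Term.symbols]
  | .succ t => by simp [Term.length, Term.symbols]
  | .add t u => by simp [Term.length, Term.symbols]
  | .mul t u => by simp [Term.length, Term.symbols]

lemma term_length_subst (x : ℕ) (s : Term) :
    ∀ t : Term, (t.subst x s).length + t.countOcc x = t.length + t.countOcc x * s.length
  | .var i => by
      by_cases h : i = x <;>
        simp [Term.subst, Term.countOcc, h, Term.length, Term.symbols]
      omega
  | .zero => by simp [Term.subst, Term.countOcc]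
  | .succ t => by
      have := term_length_subst x s t
      simp [Term.subst, Term.countOcc, Term.length, Term.symbols] at *
      omega
  | .add t u => by
      have h1 := term_length_subst x s t
      have h2 := term_length_subst x s u
      simp [Term.subst, Term.countOcc, Term.length, Term.symbols, Nat.add_mul] at *
      omega
  | .mul t u => by
      have h1 := term_length_subst x s t
      have h2 := term_length_subst x s u
      simp [Term.subst, Term.countOcc, Term.length, Term.symbols, Nat.add_mul] at *
      omega

lemma formula_length_subst (x : ℕ) (s : Term) :
    ∀ φ : Formula, (φ.subst x s).length + φ.countFreeOcc x
      = φ.length + φ.countFreeOcc x * s.length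
  | .eq t u => by
      have h1 := term_length_subst x s t
      have h2 := term_length_subst x s u
      simp [Formula.subst, Formula.countFreeOcc, Formula.length, Formula.symbols,
        Nat.add_mul, Term.length] at *
      omega
  | .lt t u => by
      have h1 := term_length_subst x s t
      have h2 := term_length_subst x s u
      simp [Formula.subst, Formula.countFreeOcc, Formula.length, Formula.symbols,
        Nat.add_mul, Term.length] at *
      omega
  | .not φ => by
      have := formula_length_subst x s φ
      simp [Formula.subst, Formula.countFreeOcc, Formula.length, Formula.symbols] at *
      omega
  | .and φ ψ => by
      have h1 := formula_length_subst x s φ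
      have h2 := formula_length_subst x s ψ
      simp [Formula.subst, Formula.countFreeOcc, Formula.length, Formula.symbols,
        Nat.add_mul] at *
      omega
  | .or φ ψ => by
      have h1 := formula_length_subst x s φ
      have h2 := formula_length_subst x s ψ
      simp [Formula.subst, Formula.countFreeOcc, Formula.length, Formula.symbols,
        Nat.add_mul] at *
      omega
  | .imp φ ψ => by
      have h1 := formula_length_subst x s φ
      have h2 := formula_length_subst x s ψ
      simp [Formula.subst, Formula.countFreeOcc, Formula.length, Formula.symbols,
        Nat.add_mul] at *
      omega
  | .all j φ => by
      by_cases h : j = x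
      · simp [Formula.subst, h, Formula.countFreeOcc]
      · have := formula_length_subst x s φ
        simp [Formula.subst, h, Formula.countFreeOcc, Formula.length, Formula.symbols] at *
        omega
  | .ex j φ => by
      by_cases h : j = x
      · simp [Formula.subst, h, Formula.countFreeOcc]
      · have := formula_length_subst x s φ
        simp [Formula.subst, h, Formula.countFreeOcc, Formula.length, Formula.symbols] at *
        omega

lemma formula_length_pos : ∀ φ : Formula, 0 < φ.length
  | .eq t u => by simp [Formula.length, Formula.symbols]
  | .lt t u => by simp [Formula.length, Formula.symbols]
  | .not φ => by simp [Formula.length, Formula.symbols]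
  | .and φ ψ => by simp [Formula.length, Formula.symbols]
  | .or φ ψ => by simp [Formula.length, Formula.symbols]
  | .imp φ ψ => by simp [Formula.length, Formula.symbols]
  | .all j φ => by simp [Formula.length, Formula.symbols]
  | .ex j φ => by simp [Formula.length, Formula.symbols]

lemma term_varsOf_subst (x : ℕ) (s : Term) :
    ∀ t : Term, ∀ j ∈ (t.subst x s).varsOf, j ∈ (t.varsOf.erase x) ∪ s.varsOf
  | .var i, j, hj => by
      by_cases h : i = x
      · simp only [Term.subst, if_pos h] at hj
        simp [hj]
      · simp only [Term.subst, if_neg h, Term.varsOf, Finset.mem_singleton] at hj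
        subst hj
        simp [Term.varsOf, h]
  | .zero, j, hj => by simp [Term.subst, Term.varsOf] at hj
  | .succ t, j, hj => term_varsOf_subst x s t j hj
  | .add t u, j, hj => by
      simp only [Term.subst, Term.varsOf, Finset.mem_union] at hj
      rcases hj with hj | hj
      · have := term_varsOf_subst x s t j hj
        simp only [Term.varsOf, Finset.mem_union, Finset.mem_erase] at *
        tauto
      · have := term_varsOf_subst x s u j hj
        simp only [Term.varsOf, Finset.mem_union, Finset.mem_erase] at *
        tauto
  | .mul t u, j, hj => by
      simp only [Term.subst, Term.varsOf, Finset.mem_union] at hj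
      rcases hj with hj | hj
      · have := term_varsOf_subst x s t j hj
        simp only [Term.varsOf, Finset.mem_union, Finset.mem_erase] at *
        tauto
      · have := term_varsOf_subst x s u j hj
        simp only [Term.varsOf, Finset.mem_union, Finset.mem_erase] at *
        tauto
lemma formula_freeVars_subst (x : ℕ) (s : Term) :
    ∀ φ : Formula, ∀ j ∈ (φ.subst x s).freeVars, j ∈ (φ.freeVars.erase x) ∪ s.varsOf
  | .eq t u, j, hj => by
      simp only [Formula.subst, Formula.freeVars, Finset.mem_union] at hj ⊢
      rcases hj with hj | hj
      · have := term_varsOf_subst x s t j hj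
        simp only [Finset.mem_union, Finset.mem_erase] at *; tauto
      · have := term_varsOf_subst x s u j hj
        simp only [Finset.mem_union, Finset.mem_erase] at *; tauto
  | .lt t u, j, hj => by
      simp only [Formula.subst, Formula.freeVars, Finset.mem_union] at hj ⊢
      rcases hj with hj | hj
      · have := term_varsOf_subst x s t j hj
        simp only [Finset.mem_union, Finset.mem_erase] at *; tauto
      · have := term_varsOf_subst x s u j hj
        simp only [Finset.mem_union, Finset.mem_erase] at *; tauto
  | .not φ, j, hj => formula_freeVars_subst x s φ j hj
  | .and φ ψ, j, hj => by
      simp only [Formula.subst, Formula.freeVars, Finset.mem_union] at hj ⊢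
      rcases hj with hj | hj
      · have := formula_freeVars_subst x s φ j hj
        simp only [Finset.mem_union, Finset.mem_erase] at *; tauto
      · have := formula_freeVars_subst x s ψ j hj
        simp only [Finset.mem_union, Finset.mem_erase] at *; tauto
  | .or φ ψ, j, hj => by
      simp only [Formula.subst, Formula.freeVars, Finset.mem_union] at hj ⊢
      rcases hj with hj | hj
      · have := formula_freeVars_subst x s φ j hj
        simp only [Finset.mem_union, Finset.mem_erase] at *; tauto
      · have := formula_freeVars_subst x s ψ j hj
        simp only [Finset.mem_union, Finset.mem_erase] at *; tauto
  | .imp φ ψ, j, hj => by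
      simp only [Formula.subst, Formula.freeVars, Finset.mem_union] at hj ⊢
      rcases hj with hj | hj
      · have := formula_freeVars_subst x s φ j hj
        simp only [Finset.mem_union, Finset.mem_erase] at *; tauto
      · have := formula_freeVars_subst x s ψ j hj
        simp only [Finset.mem_union, Finset.mem_erase] at *; tauto
  | .all i φ, j, hj => by
      by_cases h : i = x
      · subst h
        simp only [Formula.subst, if_pos rfl, ↓reduceIte] at hj
        simp only [Formula.freeVars, Finset.mem_union, Finset.mem_erase] at hj ⊢
        tauto
      · simp only [Formula.subst, if_neg h, Formula.freeVars, Finset.mem_erase] at hj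
        have := formula_freeVars_subst x s φ j hj.2
        simp only [Formula.freeVars, Finset.mem_union, Finset.mem_erase] at *
        tauto
  | .ex i φ, j, hj => by
      by_cases h : i = x
      · subst h
        simp only [Formula.subst, if_pos rfl, ↓reduceIte] at hj
        simp only [Formula.freeVars, Finset.mem_union, Finset.mem_erase] at hj ⊢
        tauto
      · simp only [Formula.subst, if_neg h, Formula.freeVars, Finset.mem_erase] at hj
        have := formula_freeVars_subst x s φ j hj.2
        simp only [Formula.freeVars, Finset.mem_union, Finset.mem_erase] at *
        tauto
def Term.rename (ρ : ℕ → ℕ) : Term → Term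
  | .var i => .var (ρ i)
  | .zero => .zero
  | .succ t => .succ (t.rename ρ)
  | .add t u => .add (t.rename ρ) (u.rename ρ)
  | .mul t u => .mul (t.rename ρ) (u.rename ρ)

def Formula.rename (ρ : ℕ → ℕ) : Formula → Formula
  | .eq t u => .eq (t.rename ρ) (u.rename ρ)
  | .lt t u => .lt (t.rename ρ) (u.rename ρ)
  | .not φ => .not (φ.rename ρ)
  | .and φ ψ => .and (φ.rename ρ) (ψ.rename ρ)
  | .or φ ψ => .or (φ.rename ρ) (ψ.rename ρ)
  | .imp φ ψ => .imp (φ.rename ρ) (ψ.rename ρ)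
  | .all i φ => .all (ρ i) (φ.rename ρ)
  | .ex i φ => .ex (ρ i) (φ.rename ρ)

lemma term_rename_length (ρ : ℕ → ℕ) : ∀ t : Term, (t.rename ρ).length = t.length
  | .var i => rfl
  | .zero => rfl
  | .succ t => by
      simp only [Term.rename, Term.length, Term.symbols, List.length_cons]
      exact congrArg _ (term_rename_length ρ t)
  | .add t u => by
      have h1 := term_rename_length ρ t
      have h2 := term_rename_length ρ u
      simp only [Term.rename, Term.length, Term.symbols, List.length_append,
        List.length_cons] at *
      omega
  | .mul t u => by
      have h1 := term_rename_length ρ t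
      have h2 := term_rename_length ρ u
      simp only [Term.rename, Term.length, Term.symbols, List.length_append,
        List.length_cons] at *
      omega

lemma formula_rename_length (ρ : ℕ → ℕ) : ∀ φ : Formula, (φ.rename ρ).length = φ.length
  | .eq t u => by
      have h1 := term_rename_length ρ t
      have h2 := term_rename_length ρ u
      simp only [Formula.rename, Formula.length, Formula.symbols, List.length_append,
        List.length_cons, Term.length] at *
      omega
  | .lt t u => by
      have h1 := term_rename_length ρ t
      have h2 := term_rename_length ρ u
      simp only [Formula.rename, Formula.length, Formula.symbols, List.length_append,
        List.length_cons, Term.length] at *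
      omega
  | .not φ => by
      have := formula_rename_length ρ φ
      simp only [Formula.rename, Formula.length, Formula.symbols, List.length_cons] at *
      omega
  | .and φ ψ => by
      have h1 := formula_rename_length ρ φ
      have h2 := formula_rename_length ρ ψ
      simp only [Formula.rename, Formula.length, Formula.symbols, List.length_append,
        List.length_cons] at *
      omega
  | .or φ ψ => by
      have h1 := formula_rename_length ρ φ
      have h2 := formula_rename_length ρ ψ
      simp only [Formula.rename, Formula.length, Formula.symbols, List.length_append,
        List.length_cons] at *
      omega
  | .imp φ ψ => by
      have h1 := formula_rename_length ρ φ
      have h2 := formula_rename_length ρ ψ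
      simp only [Formula.rename, Formula.length, Formula.symbols, List.length_append,
        List.length_cons] at *
      omega
  | .all i φ => by
      have := formula_rename_length ρ φ
      simp only [Formula.rename, Formula.length, Formula.symbols, List.length_cons] at *
      omega
  | .ex i φ => by
      have := formula_rename_length ρ φ
      simp only [Formula.rename, Formula.length, Formula.symbols, List.length_cons] at *
      omega

@[simp] lemma numeral_rename (ρ : ℕ → ℕ) : ∀ m : ℕ, (numeral m).rename ρ = numeral m
  | 0 => rfl
  | m + 1 => by simp [numeral, Term.rename, numeral_rename ρ m]

lemma term_rename_varsOf (ρ : ℕ → ℕ) :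
    ∀ t : Term, (t.rename ρ).varsOf = t.varsOf.image ρ
  | .var i => by simp [Term.rename, Term.varsOf]
  | .zero => by simp [Term.rename, Term.varsOf]
  | .succ t => term_rename_varsOf ρ t
  | .add t u => by
      simp [Term.rename, Term.varsOf, term_rename_varsOf ρ t, term_rename_varsOf ρ u,
        Finset.image_union]
  | .mul t u => by
      simp [Term.rename, Term.varsOf, term_rename_varsOf ρ t, term_rename_varsOf ρ u,
        Finset.image_union]

lemma formula_rename_allVars (ρ : ℕ → ℕ) :
    ∀ φ : Formula, (φ.rename ρ).allVars = φ.allVars.image ρ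
  | .eq t u => by
      simp [Formula.rename, Formula.allVars, term_rename_varsOf, Finset.image_union]
  | .lt t u => by
      simp [Formula.rename, Formula.allVars, term_rename_varsOf, Finset.image_union]
  | .not φ => formula_rename_allVars ρ φ
  | .and φ ψ => by
      simp [Formula.rename, Formula.allVars, formula_rename_allVars ρ φ,
        formula_rename_allVars ρ ψ, Finset.image_union]
  | .or φ ψ => by
      simp [Formula.rename, Formula.allVars, formula_rename_allVars ρ φ,
        formula_rename_allVars ρ ψ, Finset.image_union]
  | .imp φ ψ => by
      simp [Formula.rename, Formula.allVars, formula_rename_allVars ρ φ,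
        formula_rename_allVars ρ ψ, Finset.image_union]
  | .all i φ => by
      simp [Formula.rename, Formula.allVars, formula_rename_allVars ρ φ,
        Finset.image_insert]
  | .ex i φ => by
      simp [Formula.rename, Formula.allVars, formula_rename_allVars ρ φ,
        Finset.image_insert]

lemma formula_rename_freeVars (ρ : ℕ → ℕ) :
    ∀ φ : Formula, ∀ j ∈ (φ.rename ρ).freeVars, j ∈ φ.freeVars.image ρ
  | .eq t u, j, hj => by
      simp only [Formula.rename, Formula.freeVars, Finset.mem_union,
        term_rename_varsOf] at hj
      simp only [Formula.freeVars, Finset.image_union, Finset.mem_union]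
      exact hj
  | .lt t u, j, hj => by
      simp only [Formula.rename, Formula.freeVars, Finset.mem_union,
        term_rename_varsOf] at hj
      simp only [Formula.freeVars, Finset.image_union, Finset.mem_union]
      exact hj
  | .not φ, j, hj => formula_rename_freeVars ρ φ j hj
  | .and φ ψ, j, hj => by
      simp only [Formula.rename, Formula.freeVars, Finset.mem_union] at hj
      simp only [Formula.freeVars, Finset.image_union, Finset.mem_union]
      rcases hj with hj | hj
      · exact Or.inl (formula_rename_freeVars ρ φ j hj)
      · exact Or.inr (formula_rename_freeVars ρ ψ j hj)
  | .or φ ψ, j, hj => by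
      simp only [Formula.rename, Formula.freeVars, Finset.mem_union] at hj
      simp only [Formula.freeVars, Finset.image_union, Finset.mem_union]
      rcases hj with hj | hj
      · exact Or.inl (formula_rename_freeVars ρ φ j hj)
      · exact Or.inr (formula_rename_freeVars ρ ψ j hj)
  | .imp φ ψ, j, hj => by
      simp only [Formula.rename, Formula.freeVars, Finset.mem_union] at hj
      simp only [Formula.freeVars, Finset.image_union, Finset.mem_union]
      rcases hj with hj | hj
      · exact Or.inl (formula_rename_freeVars ρ φ j hj)
      · exact Or.inr (formula_rename_freeVars ρ ψ j hj)
  | .all i φ, j, hj => by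
      simp only [Formula.rename, Formula.freeVars, Finset.mem_erase] at hj
      obtain ⟨hne, hj⟩ := hj
      have := formula_rename_freeVars ρ φ j hj
      simp only [Formula.freeVars, Finset.mem_image, Finset.mem_erase] at this ⊢
      obtain ⟨a, ha, rfl⟩ := this
      exact ⟨a, ⟨fun e => hne (by rw [e]), ha⟩, rfl⟩
  | .ex i φ, j, hj => by
      simp only [Formula.rename, Formula.freeVars, Finset.mem_erase] at hj
      obtain ⟨hne, hj⟩ := hj
      have := formula_rename_freeVars ρ φ j hj
      simp only [Formula.freeVars, Finset.mem_image, Finset.mem_erase] at this ⊢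
      obtain ⟨a, ha, rfl⟩ := this
      exact ⟨a, ⟨fun e => hne (by rw [e]), ha⟩, rfl⟩

lemma term_rename_val {M : Struct} (ρ : ℕ → ℕ) (v : ℕ → M.carrier) :
    ∀ t : Term, Term.val M v (t.rename ρ) = Term.val M (v ∘ ρ) t
  | .var i => rfl
  | .zero => rfl
  | .succ t => by simp [Term.rename, Term.val, term_rename_val ρ v t]
  | .add t u => by
      simp [Term.rename, Term.val, term_rename_val ρ v t, term_rename_val ρ v u]
  | .mul t u => by
      simp [Term.rename, Term.val, term_rename_val ρ v t, term_rename_val ρ v u]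

lemma freeVars_subset_allVars : ∀ φ : Formula, φ.freeVars ⊆ φ.allVars
  | .eq t u => by simp [Formula.freeVars, Formula.allVars]
  | .lt t u => by simp [Formula.freeVars, Formula.allVars]
  | .not φ => freeVars_subset_allVars φ
  | .and φ ψ => Finset.union_subset_union (freeVars_subset_allVars φ) (freeVars_subset_allVars ψ)
  | .or φ ψ => Finset.union_subset_union (freeVars_subset_allVars φ) (freeVars_subset_allVars ψ)
  | .imp φ ψ => Finset.union_subset_union (freeVars_subset_allVars φ) (freeVars_subset_allVars ψ)
  | .all i φ => (Finset.erase_subset _ _).trans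
      ((freeVars_subset_allVars φ).trans (Finset.subset_insert _ _))
  | .ex i φ => (Finset.erase_subset _ _).trans
      ((freeVars_subset_allVars φ).trans (Finset.subset_insert _ _))

lemma formula_rename_realize {M : Struct} {ρ : ℕ → ℕ} :
    ∀ (φ : Formula) (v : ℕ → M.carrier), Set.InjOn ρ ↑φ.allVars →
      (Formula.Realize M v (φ.rename ρ) ↔ Formula.Realize M (v ∘ ρ) φ)
  | .eq t u, v, _ => by simp [Formula.rename, Formula.Realize, term_rename_val]
  | .lt t u, v, _ => by simp [Formula.rename, Formula.Realize, term_rename_val]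
  | .not φ, v, h => by
      simp only [Formula.rename, Formula.Realize]
      rw [formula_rename_realize φ v h]
  | .and φ ψ, v, h => by
      simp only [Formula.rename, Formula.Realize]
      have h1 : Set.InjOn ρ ↑φ.allVars := by
        refine h.mono ?_
        intro a ha
        simp only [Formula.allVars, Finset.coe_union, Set.mem_union]
        exact Or.inl ha
      have h2 : Set.InjOn ρ ↑ψ.allVars := by
        refine h.mono ?_
        intro a ha
        simp only [Formula.allVars, Finset.coe_union, Set.mem_union]
        exact Or.inr ha
      rw [formula_rename_realize φ v h1, formula_rename_realize ψ v h2]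
  | .or φ ψ, v, h => by
      simp only [Formula.rename, Formula.Realize]
      have h1 : Set.InjOn ρ ↑φ.allVars := by
        refine h.mono ?_
        intro a ha
        simp only [Formula.allVars, Finset.coe_union, Set.mem_union]
        exact Or.inl ha
      have h2 : Set.InjOn ρ ↑ψ.allVars := by
        refine h.mono ?_
        intro a ha
        simp only [Formula.allVars, Finset.coe_union, Set.mem_union]
        exact Or.inr ha
      rw [formula_rename_realize φ v h1, formula_rename_realize ψ v h2]
  | .imp φ ψ, v, h => by
      simp only [Formula.rename, Formula.Realize]
      have h1 : Set.InjOn ρ ↑φ.allVars := by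
        refine h.mono ?_
        intro a ha
        simp only [Formula.allVars, Finset.coe_union, Set.mem_union]
        exact Or.inl ha
      have h2 : Set.InjOn ρ ↑ψ.allVars := by
        refine h.mono ?_
        intro a ha
        simp only [Formula.allVars, Finset.coe_union, Set.mem_union]
        exact Or.inr ha
      rw [formula_rename_realize φ v h1, formula_rename_realize ψ v h2]
  | .all i φ, v, h => by
      simp only [Formula.rename, Formula.Realize]
      refine forall_congr' fun a => ?_
      have hsub : Set.InjOn ρ ↑φ.allVars := by
        refine h.mono ?_
        intro b hb
        simp only [Formula.allVars, Finset.coe_insert, Set.mem_insert_iff]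
        exact Or.inr hb
      rw [formula_rename_realize φ (Function.update v (ρ i) a) hsub]
      refine Formula.realize_congr φ fun j hj => ?_
      rcases eq_or_ne j i with rfl | hne
      · simp [Function.comp]
      · have : ρ j ≠ ρ i := by
          intro e
          exact hne (h (by simp only [Formula.allVars, Finset.coe_insert,
            Set.mem_insert_iff]; exact Or.inr (freeVars_subset_allVars φ hj))
            (by simp [Formula.allVars]) e)
        simp [Function.comp, Function.update_of_ne this, Function.update_of_ne hne]
  | .ex i φ, v, h => by
      simp only [Formula.rename, Formula.Realize]
      refine exists_congr fun a => ?_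
      have hsub : Set.InjOn ρ ↑φ.allVars := by
        refine h.mono ?_
        intro b hb
        simp only [Formula.allVars, Finset.coe_insert, Set.mem_insert_iff]
        exact Or.inr hb
      rw [formula_rename_realize φ (Function.update v (ρ i) a) hsub]
      refine Formula.realize_congr φ fun j hj => ?_
      rcases eq_or_ne j i with rfl | hne
      · simp [Function.comp]
      · have : ρ j ≠ ρ i := by
          intro e
          exact hne (h (by simp only [Formula.allVars, Finset.coe_insert,
            Set.mem_insert_iff]; exact Or.inr (freeVars_subset_allVars φ hj))
            (by simp [Formula.allVars]) e)
        simp [Function.comp, Function.update_of_ne this, Function.update_of_ne hne]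
lemma term_var_mem_symbols : ∀ t : Term, ∀ x ∈ t.varsOf, Symbol.var x ∈ t.symbols
  | .var i, x, hx => by
      simp [Term.varsOf] at hx
      simp [Term.symbols, hx]
  | .zero, x, hx => by simp [Term.varsOf] at hx
  | .succ t, x, hx =>
      List.mem_cons_of_mem _ (term_var_mem_symbols t x hx)
  | .add t u, x, hx => by
      simp only [Term.varsOf, Finset.mem_union] at hx
      rcases hx with hx | hx
      · exact List.mem_append.mpr (Or.inl (term_var_mem_symbols t x hx))
      · exact List.mem_append.mpr (Or.inr (List.mem_cons_of_mem _ (term_var_mem_symbols u x hx)))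
  | .mul t u, x, hx => by
      simp only [Term.varsOf, Finset.mem_union] at hx
      rcases hx with hx | hx
      · exact List.mem_append.mpr (Or.inl (term_var_mem_symbols t x hx))
      · exact List.mem_append.mpr (Or.inr (List.mem_cons_of_mem _ (term_var_mem_symbols u x hx)))

lemma formula_var_mem_symbols : ∀ φ : Formula, ∀ x ∈ φ.allVars, Symbol.var x ∈ φ.symbols
  | .eq t u, x, hx => by
      simp only [Formula.allVars, Finset.mem_union] at hx
      rcases hx with hx | hx
      · exact List.mem_append.mpr (Or.inl (term_var_mem_symbols t x hx))
      · exact List.mem_append.mpr (Or.inr (List.mem_cons_of_mem _ (term_var_mem_symbols u x hx)))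
  | .lt t u, x, hx => by
      simp only [Formula.allVars, Finset.mem_union] at hx
      rcases hx with hx | hx
      · exact List.mem_append.mpr (Or.inl (term_var_mem_symbols t x hx))
      · exact List.mem_append.mpr (Or.inr (List.mem_cons_of_mem _ (term_var_mem_symbols u x hx)))
  | .not φ, x, hx =>
      List.mem_cons_of_mem _ (formula_var_mem_symbols φ x hx)
  | .and φ ψ, x, hx => by
      simp only [Formula.allVars, Finset.mem_union] at hx
      rcases hx with hx | hx
      · exact List.mem_append.mpr (Or.inl (formula_var_mem_symbols φ x hx))
      · exact List.mem_append.mpr (Or.inr (List.mem_cons_of_mem _ (formula_var_mem_symbols ψ x hx)))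
  | .or φ ψ, x, hx => by
      simp only [Formula.allVars, Finset.mem_union] at hx
      rcases hx with hx | hx
      · exact List.mem_append.mpr (Or.inl (formula_var_mem_symbols φ x hx))
      · exact List.mem_append.mpr (Or.inr (List.mem_cons_of_mem _ (formula_var_mem_symbols ψ x hx)))
  | .imp φ ψ, x, hx => by
      simp only [Formula.allVars, Finset.mem_union] at hx
      rcases hx with hx | hx
      · exact List.mem_append.mpr (Or.inl (formula_var_mem_symbols φ x hx))
      · exact List.mem_append.mpr (Or.inr (List.mem_cons_of_mem _ (formula_var_mem_symbols ψ x hx)))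
  | .all i φ, x, hx => by
      simp only [Formula.allVars, Finset.mem_insert] at hx
      rcases hx with rfl | hx
      · exact List.mem_cons_of_mem _ (List.mem_cons_self)
      · exact List.mem_cons_of_mem _ (List.mem_cons_of_mem _ (formula_var_mem_symbols φ x hx))
  | .ex i φ, x, hx => by
      simp only [Formula.allVars, Finset.mem_insert] at hx
      rcases hx with rfl | hx
      · exact List.mem_cons_of_mem _ (List.mem_cons_self)
      · exact List.mem_cons_of_mem _ (List.mem_cons_of_mem _ (formula_var_mem_symbols φ x hx))

/-- Extract the variable index of a symbol, if any. -/
def symVar : Symbol → Option ℕ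
  | .var i => some i
  | _ => none

lemma card_allVars_le_length (φ : Formula) : φ.allVars.card ≤ φ.length := by
  have hsub : φ.allVars ⊆ (φ.symbols.filterMap symVar).toFinset := by
    intro x hx
    rw [List.mem_toFinset, List.mem_filterMap]
    exact ⟨Symbol.var x, formula_var_mem_symbols φ x hx, rfl⟩
  calc φ.allVars.card ≤ (φ.symbols.filterMap symVar).toFinset.card :=
        Finset.card_le_card hsub
    _ ≤ (φ.symbols.filterMap symVar).length := (φ.symbols.filterMap symVar).toFinset_card_le
    _ ≤ φ.symbols.length := List.length_filterMap_le _ _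
    _ = φ.length := rfl
lemma names_small (T : Set Formula) (hTsent : ∀ σ ∈ T, σ.IsSentence)
    {μ : Formula} {i m : ℕ} (hlen : μ.length < m) (hμ : Names T μ i) :
    ∃ μ' : Formula, μ'.length < m ∧ μ'.allVars ⊆ Finset.range m ∧ Names T μ' i := by
  classical
  set A : Finset ℕ := insert 0 μ.allVars with hA
  set l : List ℕ := A.sort (· ≤ ·) with hl
  set ρ : ℕ → ℕ := fun x => l.idxOf x with hρ
  have hmem : ∀ x, x ∈ A ↔ x ∈ l := by
    intro x; rw [hl, Finset.mem_sort]
  have hlen_l : l.length = A.card := Finset.length_sort _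
  have hcard : A.card ≤ m := by
    have h1 : A.card ≤ μ.allVars.card + 1 := Finset.card_insert_le _ _
    have h2 := card_allVars_le_length μ
    omega
  have hlt : ∀ x ∈ A, ρ x < m := by
    intro x hx
    have h1 : l.idxOf x < l.length := List.idxOf_lt_length_iff.mpr ((hmem x).mp hx)
    have h2 : ρ x = l.idxOf x := rfl
    omega
  have hinj : Set.InjOn ρ ↑A := by
    intro x hx y hy hxy
    exact (List.idxOf_inj ((hmem x).mp hx)).mp hxy
  have hρ0 : ρ 0 = 0 := by
    have h0A : (0 : ℕ) ∈ l := (hmem 0).mp (by simp [hA])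
    have hsorted : l.Pairwise (· ≤ ·) := Finset.pairwise_sort _ _
    cases hl' : l with
    | nil => rw [hl'] at h0A; simp at h0A
    | cons a tl =>
        rw [hl'] at h0A hsorted
        rcases List.mem_cons.mp h0A with h | h
        · rw [hρ, hl', ← h]; simp
        · have : a ≤ 0 := (List.pairwise_cons.mp hsorted).1 0 h
          have ha : a = 0 := Nat.le_zero.mp this
          rw [hρ, hl', ha]; simp
  have hAsub : ↑μ.allVars ⊆ (↑A : Set ℕ) := by
    intro x hx; simp [hA] at hx ⊢; tauto
  refine ⟨μ.rename ρ, ?_, ?_, ?_, ?_⟩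
  · rw [formula_rename_length]; exact hlen
  · rw [formula_rename_allVars]
    intro x hx
    simp only [Finset.mem_image] at hx
    obtain ⟨y, hy, rfl⟩ := hx
    exact Finset.mem_range.mpr (hlt y (by simp [hA, hy]))
  · intro j hj
    have := formula_rename_freeVars ρ μ j hj
    simp only [Finset.mem_image] at this
    obtain ⟨y, hy, rfl⟩ := this
    have : y = 0 := by simpa using hμ.1 hy
    subst this
    simp [hρ0]
  · -- Proves T (.all 0 (iffF (μ.rename ρ) (.eq v0 (numeral i))))
    set σ : Formula := .all 0 (Formula.iffF μ (.eq v0 (numeral i))) with hσ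
    have hσeq : σ.rename ρ = .all 0 (Formula.iffF (μ.rename ρ) (.eq v0 (numeral i))) := by
      simp [hσ, Formula.rename, Formula.iffF, Term.rename, v0, hρ0]
    have hσall : ↑σ.allVars ⊆ (↑A : Set ℕ) := by
      intro x hx
      simp only [hσ, Formula.allVars, Formula.iffF, Term.varsOf, v0, numeral_varsOf,
        Finset.coe_insert, Set.mem_insert_iff, Finset.coe_union, Set.mem_union,
        Finset.coe_singleton, Set.mem_singleton_iff, Finset.coe_empty,
        Set.mem_empty_iff_false, or_false, hA] at hx ⊢
      tauto
    intro M v hT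
    rw [← hσeq, formula_rename_realize σ v (hinj.mono hσall)]
    refine hμ.2 M (v ∘ ρ) fun ψ hψ => ?_
    refine (Formula.realize_congr ψ fun j hj => ?_).mp (hT ψ hψ)
    rw [hTsent ψ hψ] at hj
    simp at hj
/-- The interpretation of the numeral for `n` in a structure. -/
def natV (M : Struct) : ℕ → M.carrier
  | 0 => M.zero
  | n + 1 => M.succ (natV M n)

lemma numeral_val (M : Struct) (v : ℕ → M.carrier) :
    ∀ m : ℕ, Term.val M v (numeral m) = natV M m
  | 0 => rfl
  | m + 1 => by simp [numeral, Term.val, natV, numeral_val M v m]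

lemma Q_trichotomy {M : Struct}
    (hax3 : ∀ a, a ≠ M.zero → ∃ b, a = M.succ b)
    (hax4 : ∀ a, M.add a M.zero = a)
    (hax5 : ∀ a b, M.add a (M.succ b) = M.succ (M.add a b))
    (hax8 : ∀ a b, M.lt a b ↔ ∃ c, M.add c (M.succ a) = b) :
    ∀ (n : ℕ) (a : M.carrier),
      M.lt a (natV M n) ∨ a = natV M n ∨ M.lt (natV M n) a := by
  classical
  intro n
  induction n with
  | zero =>
      intro a
      by_cases h : a = M.zero
      · exact Or.inr (Or.inl h)
      · obtain ⟨b, rfl⟩ := hax3 a h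
        refine Or.inr (Or.inr ((hax8 _ _).mpr ⟨b, ?_⟩))
        show M.add b (M.succ M.zero) = M.succ b
        rw [hax5, hax4]
  | succ n ih =>
      intro a
      by_cases h : a = M.zero
      · subst h
        refine Or.inl ((hax8 _ _).mpr ⟨natV M n, ?_⟩)
        show M.add (natV M n) (M.succ M.zero) = M.succ (natV M n)
        rw [hax5, hax4]
      · obtain ⟨b, rfl⟩ := hax3 a h
        rcases ih b with hb | hb | hb
        · obtain ⟨c, hc⟩ := (hax8 _ _).mp hb
          refine Or.inl ((hax8 _ _).mpr ⟨c, ?_⟩)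
          show M.add c (M.succ (M.succ b)) = M.succ (natV M n)
          rw [hax5, hc]
        · exact Or.inr (Or.inl (by rw [hb]; rfl))
        · obtain ⟨c, hc⟩ := (hax8 _ _).mp hb
          refine Or.inr (Or.inr ((hax8 _ _).mpr ⟨c, ?_⟩))
          show M.add c (M.succ (M.succ (natV M n))) = M.succ b
          rw [hax5, hc]

/-- The canonical assignment sending `v₀ ↦ a`, everything else `↦ b`. -/
def asg (M : Struct) (a b : M.carrier) : ℕ → M.carrier := fun i => if i = 0 then a else b

lemma realize_two {M : Struct} {φ : Formula} (hfv : φ.freeVars ⊆ {0, 1})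
    {v w : ℕ → M.carrier} (h0 : v 0 = w 0) (h1 : v 1 = w 1) :
    Formula.Realize M v φ ↔ Formula.Realize M w φ := by
  refine Formula.realize_congr φ fun i hi => ?_
  have := hfv hi
  simp only [Finset.mem_insert, Finset.mem_singleton] at this
  rcases this with rfl | rfl <;> assumption
lemma psi_freeVars {φ : Formula} (hfv : φ.freeVars ⊆ {0, 1}) :
    (psiOf φ).freeVars ⊆ {0, 1} := by
  intro j hj
  simp only [psiOf, Formula.freeVars, Finset.mem_union, Finset.mem_erase] at hj
  rcases hj with hj | ⟨hj2, hj⟩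
  · exact hfv hj
  · rcases hj with hj | hj
    · simp only [v2, v0, Term.varsOf, Finset.mem_union, Finset.mem_singleton] at hj
      rcases hj with rfl | rfl
      · exact absurd rfl hj2
      · simp
    · have := formula_freeVars_subst 0 v2 φ j hj
      simp only [Finset.mem_union, Finset.mem_erase, v2, Term.varsOf,
        Finset.mem_singleton] at this
      rcases this with ⟨hj0, hjf⟩ | rfl
      · exact hfv hjf
      · exact absurd rfl hj2

lemma psi_length (φ : Formula) : (psiOf φ).length = 2 * φ.length + 8 := by
  have hsub : (φ.subst 0 v2).length = φ.length := by
    have := formula_length_subst 0 v2 φ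
    simp only [Term.length, v2, Term.symbols, List.length_cons, List.length_nil,
      mul_one] at this
    simp only [v2]
    omega
  simp only [psiOf, Formula.length, Formula.symbols, List.length_append,
    List.length_cons, List.length_nil, v2, v0, Term.symbols] at *
  omega

lemma tTerm_varsOf (k : ℕ) : (tTerm k).varsOf = ∅ := by
  simp [tTerm, Term.varsOf]

lemma tTerm_length (k : ℕ) : (tTerm k).length = 2 * k + 15 := by
  have h10 := numeral_length 10
  have hk := numeral_length k
  simp only [Term.length, Term.symbols, List.length_append, List.length_cons,
    tTerm] at *
  omega

lemma tTerm_val_std (v : ℕ → ℕ) (k : ℕ) :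
    Term.val stdModel v (tTerm k) = 10 * (k * k) := by
  simp [tTerm, Term.val, numeral_val_std]

lemma psi_realize {M : Struct} {φ : Formula} (hφ2 : 2 ∉ φ.allVars)
    (hfv : φ.freeVars ⊆ {0, 1}) (w : ℕ → M.carrier) :
    Formula.Realize M w (psiOf φ) ↔
      (¬ Formula.Realize M (asg M (w 0) (w 1)) φ ∧
        ∀ b, M.lt b (w 0) → Formula.Realize M (asg M b (w 1)) φ) := by
  simp only [psiOf, Formula.Realize]
  constructor
  · rintro ⟨h1, h2⟩
    constructor
    · intro hc
      exact h1 ((realize_two hfv (by simp [asg]) (by simp [asg])).mpr hc)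
    · intro b hb
      have := h2 b
      simp only [Formula.Realize, Term.val, v2, v0, Function.update_self,
        Function.update_of_ne (show (0:ℕ) ≠ 2 by decide)] at this
      have h3 := this hb
      rw [Formula.realize_subst φ _ (fun i hi => by
        simp only [v2, Term.varsOf, Finset.mem_singleton]
        exact fun e => hφ2 (e ▸ hi))] at h3
      refine (realize_two hfv ?_ ?_).mp h3
      · simp [Term.val, v2, asg]
      · simp [asg, Function.update_of_ne (show (1:ℕ) ≠ 0 by decide),
          Function.update_of_ne (show (1:ℕ) ≠ 2 by decide)]
  · rintro ⟨h1, h2⟩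
    constructor
    · intro hc
      exact h1 ((realize_two hfv (by simp [asg]) (by simp [asg])).mp hc)
    · intro b
      simp only [Formula.Realize, Term.val, v2, v0, Function.update_self,
        Function.update_of_ne (show (0:ℕ) ≠ 2 by decide)]
      intro hb
      rw [Formula.realize_subst φ _ (fun i hi => by
        simp only [v2, Term.varsOf, Finset.mem_singleton]
        exact fun e => hφ2 (e ▸ hi))]
      refine (realize_two hfv ?_ ?_).mpr (h2 b hb)
      · simp [Term.val, v2, asg]
      · simp [asg, Function.update_of_ne (show (1:ℕ) ≠ 0 by decide),
          Function.update_of_ne (show (1:ℕ) ≠ 2 by decide)]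
lemma brel_iff {T : Set Formula} {g : ℕ → ℕ} {φ : Formula}
    (hφ : DefinesRel φ (BRel T g)) (i j : ℕ) :
    BRel T g i j ↔ Formula.Realize stdModel (asg stdModel i j) φ := by
  rw [(hφ.2 i j)]
  have key : ∀ v : ℕ → ℕ,
      Formula.Realize stdModel v ((φ.subst 0 (numeral i)).subst 1 (numeral j)) ↔
        Formula.Realize stdModel (asg stdModel i j) φ := by
    intro v
    rw [Formula.realize_subst (M := stdModel) (x := 1) (s := numeral j)
        (φ.subst 0 (numeral i)) v (by simp),
      Formula.realize_subst (M := stdModel) (x := 0) (s := numeral i) φ _ (by simp)]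
    refine realize_two hφ.1 ?_ ?_
    · simp [numeral_val_std]
      simp [asg]
    · simp [Function.update_of_ne (show (1:ℕ) ≠ 0 by decide), numeral_val_std]
      simp [asg]
  constructor
  · intro h
    exact (key (fun _ => 0)).mp (h _)
  · intro h v
    exact (key v).mpr h
/-- **Boolos's theorem.** If T is a consistent extension of Q and Pr_T is definable,
then ψ(n,t) is true (in ω), but T does not prove ψ(n,t). -/
theorem boolos_incompleteness
    (T : Set Formula) (hTsent : ∀ σ ∈ T, σ.IsSentence)
    (hQT : QAxioms ⊆ T) (hcons : Consistent T) (hdef : Definable (PrSet T))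
    (g : ℕ → ℕ) (hg : GoodBound g)
    (φ : Formula) (hφ : DefinesRel φ (BRel T g)) (hφ2 : 2 ∉ φ.allVars)
    (k₂ : ℕ) (hk₂ : (psiOf φ).countFreeOcc 1 < k₂)
    (k : ℕ) (hk : k = (psiOf φ).length * k₂)
    (n : ℕ) (hn : ¬ Nameable T (10 * (k * k)) n)
    (hleast : ∀ m < n, Nameable T (10 * (k * k)) m) :
    IsTrue (((psiOf φ).subst 0 (numeral n)).subst 1 (tTerm k)) ∧
      ¬ Proves T (((psiOf φ).subst 0 (numeral n)).subst 1 (tTerm k)) := by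
  have hfv := hφ.1
  constructor
  · -- truth in the standard model
    intro v
    rw [Formula.realize_subst (M := stdModel) (x := 1) (s := tTerm k)
        ((psiOf φ).subst 0 (numeral n)) v (by simp [tTerm_varsOf]),
      Formula.realize_subst (M := stdModel) (x := 0) (s := numeral n)
        (psiOf φ) _ (by simp),
      psi_realize hφ2 hfv]
    simp only [Function.update_self,
      Function.update_of_ne (show (1:ℕ) ≠ 0 by decide), tTerm_val_std, numeral_val_std]
    refine ⟨fun hr => ?_, fun b hb => ?_⟩
    · obtain ⟨μ, _, hlen, hname⟩ := (brel_iff hφ n (10 * (k * k))).mpr hr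
      exact hn ⟨μ, hlen, hname⟩
    · obtain ⟨μ, hlen, hname⟩ := hleast b hb
      obtain ⟨μ', hlen', hsub', hname'⟩ := names_small T hTsent hlen hname
      exact (brel_iff hφ b (10 * (k * k))).mp
        ⟨μ', hg.2 μ' _ hsub' hlen', hlen', hname'⟩
  · -- unprovability
    intro hp
    set μ' : Formula := (psiOf φ).subst 1 (tTerm k) with hμ'
    -- μ' names n
    have hnames : Names T μ' n := by
      constructor
      · -- free variables
        intro j hj
        have h := formula_freeVars_subst 1 (tTerm k) (psiOf φ) j hj
        rw [tTerm_varsOf] at h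
        simp only [Finset.union_empty, Finset.mem_erase] at h
        have := psi_freeVars hfv h.2
        simp only [Finset.mem_insert, Finset.mem_singleton] at this
        rcases this with rfl | rfl
        · simp
        · exact absurd rfl h.1
      · -- provability (semantically)
        intro M v hT
        -- Q axioms in M
        have hax3 : ∀ a, a ≠ M.zero → ∃ b, a = M.succ b := by
          have h := hT _ (hQT (show Formula.all 0 (.imp (.not (.eq v0 .zero))
            (.ex 1 (.eq v0 (.succ v1)))) ∈ QAxioms by simp [QAxioms]))
          simp only [Formula.Realize, Term.val, v0, v1] at h
          intro a ha
          have := h a (by simpa using ha)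
          simpa [Function.update_of_ne (show (0:ℕ) ≠ 1 by decide)] using this
        have hax4 : ∀ a, M.add a M.zero = a := by
          have h := hT _ (hQT (show Formula.all 0 (.eq (.add v0 .zero) v0) ∈ QAxioms
            by simp [QAxioms]))
          simp only [Formula.Realize, Term.val, v0] at h
          simpa using h
        have hax5 : ∀ a b, M.add a (M.succ b) = M.succ (M.add a b) := by
          have h := hT _ (hQT (show Formula.all 0 (.all 1 (.eq (.add v0 (.succ v1))
            (.succ (.add v0 v1)))) ∈ QAxioms by simp [QAxioms]))
          simp only [Formula.Realize, Term.val, v0, v1] at h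
          intro a b
          have := h a b
          simpa [Function.update_of_ne (show (0:ℕ) ≠ 1 by decide)] using this
        have hax8 : ∀ a b, M.lt a b ↔ ∃ c, M.add c (M.succ a) = b := by
          have h := hT _ (hQT (show Formula.all 0 (.all 1 (Formula.iffF (.lt v0 v1)
            (.ex 2 (.eq (.add v2 (.succ v0)) v1)))) ∈ QAxioms by simp [QAxioms]))
          simp only [Formula.Realize, Formula.iffF, Term.val, v0, v1, v2] at h
          intro a b
          have := h a b
          constructor
          · intro hl
            obtain ⟨c, hc⟩ := this.1 (by
              simpa [Function.update_of_ne (show (0:ℕ) ≠ 1 by decide)] using hl)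
            refine ⟨c, ?_⟩
            simpa [Function.update_self,
              Function.update_of_ne (show (0:ℕ) ≠ 1 by decide),
              Function.update_of_ne (show (0:ℕ) ≠ 2 by decide),
              Function.update_of_ne (show (1:ℕ) ≠ 2 by decide)] using hc
          · rintro ⟨c, hc⟩
            have := this.2 ⟨c, by
              simpa [Function.update_self,
                Function.update_of_ne (show (0:ℕ) ≠ 1 by decide),
                Function.update_of_ne (show (0:ℕ) ≠ 2 by decide),
                Function.update_of_ne (show (1:ℕ) ≠ 2 by decide)] using hc⟩
            simpa [Function.update_of_ne (show (0:ℕ) ≠ 1 by decide)] using this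
        have tri := Q_trichotomy hax3 hax4 hax5 hax8 n
        -- the provable sentence realized in M
        have hreal := hp M v hT
        set tM : M.carrier := Term.val M v (tTerm k) with htM
        rw [Formula.realize_subst (M := M) (x := 1) (s := tTerm k)
            ((psiOf φ).subst 0 (numeral n)) v (by simp [tTerm_varsOf]),
          Formula.realize_subst (M := M) (x := 0) (s := numeral n)
            (psiOf φ) _ (by simp),
          psi_realize hφ2 hfv] at hreal
        simp only [Function.update_self,
          Function.update_of_ne (show (1:ℕ) ≠ 0 by decide), numeral_val] at hreal
        -- goal
        simp only [Formula.Realize, Formula.iffF, Term.val, v0]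
        intro a
        have hμr : Formula.Realize M (Function.update v 0 a) μ' ↔
            (¬ Formula.Realize M (asg M a tM) φ ∧
              ∀ b, M.lt b a → Formula.Realize M (asg M b tM) φ) := by
          rw [hμ', Formula.realize_subst (M := M) (x := 1) (s := tTerm k)
              (psiOf φ) _ (by simp [tTerm_varsOf]),
            psi_realize hφ2 hfv]
          have hval : Term.val M (Function.update v 0 a) (tTerm k) = tM := by
            rw [htM]
            exact Term.val_congr _ (by simp [tTerm_varsOf])
          simp only [Function.update_self,
            Function.update_of_ne (show (0:ℕ) ≠ 1 by decide),
            Function.update_of_ne (show (1:ℕ) ≠ 0 by decide), hval]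
        rw [numeral_val]
        constructor
        · intro ha
          obtain ⟨h1, h2⟩ := hμr.mp ha
          rcases tri a with hlt | heq | hgt
          · exact absurd (hreal.2 a hlt) h1
          · simpa using heq
          · exact absurd (h2 _ hgt) hreal.1
        · intro ha
          have : a = natV M n := by simpa using ha
          subst this
          exact hμr.mpr hreal
    -- length bound
    have hlenb : μ'.length < 10 * (k * k) := by
      have hsub := formula_length_subst 1 (tTerm k) (psiOf φ)
      rw [tTerm_length] at hsub
      have hL : (psiOf φ).length = 2 * φ.length + 8 := psi_length φ
      have hf : 1 ≤ φ.length := formula_length_pos φ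
      set c := (psiOf φ).countFreeOcc 1 with hc
      set L := (psiOf φ).length with hLdef
      have hc1 : c + 1 ≤ k₂ := hk₂
      have hL10 : 10 ≤ L := by omega
      have hk2pos : 1 ≤ k₂ := by omega
      set Y := L * (k₂ * k₂) with hY
      have hYpos : 0 < Y := by
        have := Nat.mul_pos (show 0 < L by omega)
          (Nat.mul_pos (show 0 < k₂ by omega) (show 0 < k₂ by omega))
        omega
      have m1 : L ≤ Y := Nat.le_mul_of_pos_right L
        (Nat.mul_pos (by omega) (by omega))
      have m2 : k₂ ≤ Y := by
        calc k₂ ≤ k₂ * k₂ := Nat.le_mul_of_pos_left k₂ (by omega)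
          _ ≤ L * (k₂ * k₂) := Nat.le_mul_of_pos_left _ (by omega)
      have m3 : 10 * Y ≤ L * Y := Nat.mul_le_mul_right Y hL10
      have m4 : 10 * (k * k) = 10 * (L * Y) := by rw [hk, hY]; ring
      have e1 : (c + 1) * (2 * k + 15) ≤ k₂ * (2 * k + 15) :=
        Nat.mul_le_mul_right _ hc1
      have m5 : k₂ * (2 * k + 15) = 2 * Y + 15 * k₂ := by rw [hk, hY]; ring
      have e2 : c * (2 * k + 15) + (2 * k + 15) ≤ 2 * Y + 15 * k₂ := by
        rw [← m5]
        calc c * (2 * k + 15) + (2 * k + 15) = (c + 1) * (2 * k + 15) := by ring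
          _ ≤ k₂ * (2 * k + 15) := e1
      rw [m4]
      -- hsub : μ'.length + c = L + c * (2k + 15)
      have hsub' : μ'.length + c = L + c * (2 * k + 15) := hsub
      omega
    exact hn ⟨μ', hlenb, hnames⟩

end Boolos
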